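/- For every finite simple graph G and every natural number k, the number of embeddings (injective homomorphisms) of the k-matching graph k·K₂ into the line graph L(G) is equal to the number of edge-injective homomorphisms from the wedge packing k·P₂ into G. -/

import Mathlib

open SimpleGraph

/-- A homomorphism `φ : H →g G` is *edge-injective* if distinct edges of `H`
are mapped to distinct edges of `G`. -/
def EdgeInjective {V W : Type*} {H : SimpleGraph V} {G : SimpleGraph W} (φ : H →g G) : Prop :=
  ∀ e ∈ H.edgeSet, ∀ f ∈ H.edgeSet, Sym2.map φ e = Sym2.map φ f → e = f

/-- `copies k H` is the disjoint union of `k` copies of the graph `H`. -/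
def copies {V : Type*} (k : ℕ) (H : SimpleGraph V) : SimpleGraph (Fin k × V) where
  Adj x y := x.1 = y.1 ∧ H.Adj x.2 y.2
  symm := ⟨fun x y h => ⟨h.1.symm, h.2.symm⟩⟩
  loopless := ⟨fun x h => H.loopless.irrefl _ h.2⟩

namespace MatchAux

variable {V : Type*} {G : SimpleGraph V} {k : ℕ}

lemma cs0 : (0 : Fin 2).castSucc = (0 : Fin 3) := rfl
lemma s0 : (0 : Fin 2).succ = (1 : Fin 3) := rfl
lemma cs1 : (1 : Fin 2).castSucc = (1 : Fin 3) := rfl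
lemma s1 : (1 : Fin 2).succ = (2 : Fin 3) := rfl

lemma path3_adj (j : Fin 2) : (pathGraph 3).Adj j.castSucc j.succ := by
  rw [pathGraph_adj]
  left
  simp

lemma path2_adj01 : (pathGraph 2).Adj 0 1 := by
  rw [pathGraph_adj]; left; rfl

lemma fin2_not_cross : ∀ j j' : Fin 2, ¬(j.castSucc = j'.succ ∧ j.succ = j'.castSucc) := by
  decide

lemma fin2_one_mem : ∀ j : Fin 2, j.castSucc = (1 : Fin 3) ∨ j.succ = (1 : Fin 3) := by
  decide

lemma p3_01 : (pathGraph 3).Adj 0 1 := by rw [pathGraph_adj]; decide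
lemma p3_12 : (pathGraph 3).Adj 1 2 := by rw [pathGraph_adj]; decide

/-- Characterization of the edges of `k · P₂`. -/
lemma mem_edgeSet_path3 {ε : Sym2 (Fin k × Fin 3)} :
    ε ∈ (copies k (pathGraph 3)).edgeSet ↔
      ∃ (i : Fin k) (j : Fin 2), ε = s((i, j.castSucc), (i, j.succ)) := by
  induction ε using Sym2.ind with
  | _ p q =>
    obtain ⟨i, t⟩ := p
    obtain ⟨i', t'⟩ := q
    rw [SimpleGraph.mem_edgeSet]
    constructor
    · rintro ⟨h1, h2⟩
      simp only at h1
      subst h1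
      rw [pathGraph_adj] at h2
      fin_cases t <;> fin_cases t' <;> simp_all <;> first
        | exact ⟨i, 0, Or.inl ⟨⟨rfl, by decide⟩, rfl, by decide⟩⟩
        | exact ⟨i, 0, Or.inr ⟨⟨rfl, by decide⟩, rfl, by decide⟩⟩
        | exact ⟨i, 1, Or.inl ⟨⟨rfl, by decide⟩, rfl, by decide⟩⟩
        | exact ⟨i, 1, Or.inr ⟨⟨rfl, by decide⟩, rfl, by decide⟩⟩
    · rintro ⟨a, j, h⟩
      rw [Sym2.eq_iff] at h
      rcases h with ⟨h1, h2⟩ | ⟨h1, h2⟩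
      · rw [h1, h2]; exact ⟨rfl, path3_adj j⟩
      · rw [h1, h2]; exact ⟨rfl, (path3_adj j).symm⟩

lemma edge_mem (ψ : copies k (pathGraph 3) →g G) (i : Fin k) (j : Fin 2) :
    s(ψ (i, j.castSucc), ψ (i, j.succ)) ∈ G.edgeSet :=
  G.mem_edgeSet.2 (ψ.map_adj ⟨rfl, path3_adj j⟩)

/-- The forward map: from an edge-injective hom `k·P₂ → G` to an embedding
`k·K₂ → L(G)`. -/
def fwd (ψ : copies k (pathGraph 3) →g G) (hψ : EdgeInjective ψ) :
    copies k (pathGraph 2) →g G.lineGraph where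
  toFun p := ⟨s(ψ (p.1, p.2.castSucc), ψ (p.1, p.2.succ)), edge_mem ψ p.1 p.2⟩
  map_rel' := by
    rintro ⟨i, j⟩ ⟨i', j'⟩ ⟨h1, h2⟩
    simp only at h1
    subst h1
    constructor
    · intro hcontra
      have hval : Sym2.map ⇑ψ s((i, j.castSucc), (i, j.succ)) =
          Sym2.map ⇑ψ s((i, j'.castSucc), (i, j'.succ)) := by
        rw [Sym2.map_pair_eq, Sym2.map_pair_eq]
        exact congrArg Subtype.val hcontra
      have := hψ _ (mem_edgeSet_path3.2 ⟨i, j, rfl⟩) _ (mem_edgeSet_path3.2 ⟨i, j', rfl⟩) hval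
      rw [Sym2.eq_iff] at this
      rcases this with ⟨ha, hb⟩ | ⟨ha, hb⟩
      · have : j = j' := Fin.castSucc_injective _ (congrArg Prod.snd ha)
        subst this
        exact (pathGraph 2).loopless.irrefl _ h2
      · exact fin2_not_cross j j' ⟨congrArg Prod.snd ha, congrArg Prod.snd hb⟩
    · have mem : ∀ j₀ : Fin 2, ψ (i, 1) ∈ s(ψ (i, j₀.castSucc), ψ (i, j₀.succ)) := by
        intro j₀
        rw [Sym2.mem_iff]
        rcases fin2_one_mem j₀ with h | h
        · left; rw [h]
        · right; rw [h]
      exact ⟨ψ (i, 1), mem j, mem j'⟩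

lemma fwd_inj (ψ : copies k (pathGraph 3) →g G) (hψ : EdgeInjective ψ) :
    Function.Injective ⇑(fwd ψ hψ) := by
  rintro ⟨i, j⟩ ⟨i', j'⟩ h
  have hval : Sym2.map ⇑ψ s((i, j.castSucc), (i, j.succ)) =
      Sym2.map ⇑ψ s((i', j'.castSucc), (i', j'.succ)) := by
    rw [Sym2.map_pair_eq, Sym2.map_pair_eq]
    exact congrArg Subtype.val h
  have := hψ _ (mem_edgeSet_path3.2 ⟨i, j, rfl⟩) _ (mem_edgeSet_path3.2 ⟨i', j', rfl⟩) hval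
  rw [Sym2.eq_iff] at this
  rcases this with ⟨ha, hb⟩ | ⟨ha, hb⟩
  · have hi : i = i' := congrArg Prod.fst ha
    have hj : j = j' := Fin.castSucc_injective _ (congrArg Prod.snd ha)
    rw [hi, hj]
  · exact absurd ⟨congrArg Prod.snd ha, congrArg Prod.snd hb⟩ (fin2_not_cross j j')

lemma exists_triple (φ : copies k (pathGraph 2) →g G.lineGraph) (i : Fin k) :
    ∃ t : V × V × V, (φ (i, 0) : Sym2 V) = s(t.1, t.2.1) ∧
      (φ (i, 1) : Sym2 V) = s(t.2.1, t.2.2) := by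
  have hadj : G.lineGraph.Adj (φ (i, 0)) (φ (i, 1)) :=
    φ.map_adj (show (copies k (pathGraph 2)).Adj (i, 0) (i, 1) from ⟨rfl, path2_adj01⟩)
  rw [lineGraph_adj_iff_exists] at hadj
  obtain ⟨-, y, hy1, hy2⟩ := hadj
  exact ⟨(Sym2.Mem.other hy1, y, Sym2.Mem.other hy2),
    by rw [Sym2.eq_swap]; exact (Sym2.other_spec hy1).symm,
    (Sym2.other_spec hy2).symm⟩

noncomputable def triple (φ : copies k (pathGraph 2) →g G.lineGraph) (i : Fin k) : V × V × V :=
  (exists_triple φ i).choose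

lemma triple_spec1 (φ : copies k (pathGraph 2) →g G.lineGraph) (i : Fin k) :
    (φ (i, 0) : Sym2 V) = s((triple φ i).1, (triple φ i).2.1) :=
  (exists_triple φ i).choose_spec.1

lemma triple_spec2 (φ : copies k (pathGraph 2) →g G.lineGraph) (i : Fin k) :
    (φ (i, 1) : Sym2 V) = s((triple φ i).2.1, (triple φ i).2.2) :=
  (exists_triple φ i).choose_spec.2

/-- The backward map: from an embedding `k·K₂ → L(G)` to a hom `k·P₂ → G`. -/
noncomputable def bwd (φ : copies k (pathGraph 2) →g G.lineGraph) :
    copies k (pathGraph 3) →g G where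
  toFun p := ![(triple φ p.1).1, (triple φ p.1).2.1, (triple φ p.1).2.2] p.2
  map_rel' := by
    rintro ⟨i, t⟩ ⟨i', t'⟩ ⟨h1, h2⟩
    simp only at h1
    subst h1
    rw [pathGraph_adj] at h2
    have he1 : s((triple φ i).1, (triple φ i).2.1) ∈ G.edgeSet := by
      rw [← triple_spec1 φ i]; exact (φ (i, 0)).2
    have he2 : s((triple φ i).2.1, (triple φ i).2.2) ∈ G.edgeSet := by
      rw [← triple_spec2 φ i]; exact (φ (i, 1)).2
    rw [SimpleGraph.mem_edgeSet] at he1 he2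
    fin_cases t <;> fin_cases t' <;> simp_all <;>
      first
        | exact he1
        | exact he1.symm
        | exact he2
        | exact he2.symm
        | omega

lemma bwd_map_edge (φ : copies k (pathGraph 2) →g G.lineGraph) (i : Fin k) (j : Fin 2) :
    Sym2.map ⇑(bwd φ) s((i, j.castSucc), (i, j.succ)) = (φ (i, j) : Sym2 V) := by
  fin_cases j
  · rw [Sym2.map_pair_eq]
    exact (triple_spec1 φ i).symm
  · rw [Sym2.map_pair_eq]
    exact (triple_spec2 φ i).symm

lemma bwd_edgeInj (φ : copies k (pathGraph 2) →g G.lineGraph)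
    (hφ : Function.Injective ⇑φ) : EdgeInjective (bwd φ) := by
  intro e he f hf hef
  obtain ⟨i, j, rfl⟩ := mem_edgeSet_path3.1 he
  obtain ⟨i', j', rfl⟩ := mem_edgeSet_path3.1 hf
  rw [bwd_map_edge, bwd_map_edge] at hef
  have : (i, j) = (i', j') := hφ (Subtype.ext hef)
  rw [Prod.mk.injEq] at this
  rw [this.1, this.2]

noncomputable def theEquiv (G : SimpleGraph V) (k : ℕ) :
    {φ : copies k (pathGraph 2) →g G.lineGraph // Function.Injective ⇑φ} ≃
      {ψ : copies k (pathGraph 3) →g G // EdgeInjective ψ} where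
  toFun φ := ⟨bwd φ.1, bwd_edgeInj φ.1 φ.2⟩
  invFun ψ := ⟨fwd ψ.1 ψ.2, fwd_inj ψ.1 ψ.2⟩
  left_inv := by
    rintro ⟨φ, hφ⟩
    apply Subtype.ext
    apply DFunLike.ext
    rintro ⟨i, j⟩
    apply Subtype.ext
    show s((bwd φ) (i, j.castSucc), (bwd φ) (i, j.succ)) = (φ (i, j) : Sym2 V)
    rw [← Sym2.map_pair_eq]
    exact bwd_map_edge φ i j
  right_inv := by
    rintro ⟨ψ, hψ⟩
    apply Subtype.ext
    apply DFunLike.ext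
    rintro ⟨i, t⟩
    -- key facts about the original ψ
    have h01 : ψ (i, 0) ≠ ψ (i, 1) :=
      (ψ.map_adj (show (copies k (pathGraph 3)).Adj (i, 0) (i, 1) from ⟨rfl, p3_01⟩)).ne
    have h12 : ψ (i, 1) ≠ ψ (i, 2) :=
      (ψ.map_adj (show (copies k (pathGraph 3)).Adj (i, 1) (i, 2) from ⟨rfl, p3_12⟩)).ne
    have hne : s(ψ (i, 0), ψ (i, 1)) ≠ s(ψ (i, 1), ψ (i, 2)) := by
      intro hcontra
      have hval : Sym2.map ⇑ψ s(((i : Fin k), (0 : Fin 3)), ((i : Fin k), (1 : Fin 3))) =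
          Sym2.map ⇑ψ s(((i : Fin k), (1 : Fin 3)), ((i : Fin k), (2 : Fin 3))) := by
        rw [Sym2.map_pair_eq, Sym2.map_pair_eq]; exact hcontra
      have := hψ _ (mem_edgeSet_path3.2 ⟨i, 0, rfl⟩) _ (mem_edgeSet_path3.2 ⟨i, 1, rfl⟩) hval
      rw [Sym2.eq_iff] at this
      rcases this with ⟨ha, _⟩ | ⟨ha, _⟩
      · exact absurd (congrArg Prod.snd ha) (by decide : ¬(0 : Fin 3) = 1)
      · exact absurd (congrArg Prod.snd ha) (by decide : ¬(0 : Fin 3) = 2)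
    set φ := fwd ψ hψ with hφdef
    have hs1 : s(ψ (i, 0), ψ (i, 1)) = s((triple φ i).1, (triple φ i).2.1) :=
      triple_spec1 φ i
    have hs2 : s(ψ (i, 1), ψ (i, 2)) = s((triple φ i).2.1, (triple φ i).2.2) :=
      triple_spec2 φ i
    -- the middle vertex of the triple is ψ (i,1)
    have hy : (triple φ i).2.1 = ψ (i, 1) := by
      have hm1 : (triple φ i).2.1 ∈ s(ψ (i, 0), ψ (i, 1)) := by
        rw [hs1]; exact Sym2.mem_mk_right _ _
      have hm2 : (triple φ i).2.1 ∈ s(ψ (i, 1), ψ (i, 2)) := by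
        rw [hs2]; exact Sym2.mem_mk_left _ _
      rw [Sym2.mem_iff] at hm1 hm2
      rcases hm1 with h | h
      · rcases hm2 with h' | h'
        · exact h'
        · exfalso
          apply hne
          rw [show ψ (i, 0) = ψ (i, 2) from h.symm.trans h']
          exact Sym2.eq_swap
      · exact h
    have hx : (triple φ i).1 = ψ (i, 0) := by
      rw [hy] at hs1
      rw [Sym2.eq_iff] at hs1
      rcases hs1 with ⟨h, _⟩ | ⟨h, h'⟩
      · exact h.symm
      · exact absurd h h01
    have hz : (triple φ i).2.2 = ψ (i, 2) := by
      rw [hy] at hs2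
      rw [Sym2.eq_iff] at hs2
      rcases hs2 with ⟨_, h⟩ | ⟨h, h'⟩
      · exact h.symm
      · exact absurd h'.symm h12
    show ![(triple φ i).1, (triple φ i).2.1, (triple φ i).2.2] t = ψ (i, t)
    fin_cases t <;> simp only [Matrix.cons_val_zero, Matrix.cons_val_one, Matrix.head_cons] <;>
      first
      | exact hx
      | exact hy
      | · show (triple φ i).2.2 = ψ (i, 2)
          exact hz

end MatchAux

/-- The number of embeddings (injective homomorphisms) of the `k`-matching `k·K₂` into the
line graph `L(G)` equals the number of edge-injective homomorphisms of the wedge packing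
`k·P₂` into `G`. -/
theorem matchings_in_lineGraph_eq_edgeInjective_wedgePackings
    {V : Type*} [Fintype V] (G : SimpleGraph V) (k : ℕ) :
    Nat.card {φ : copies k (pathGraph 2) →g G.lineGraph // Function.Injective ⇑φ} =
      Nat.card {φ : copies k (pathGraph 3) →g G // EdgeInjective φ} := by
  exact Nat.card_congr (MatchAux.theEquiv G k)
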